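/- Let N = 2 and suppose Ω ⊂ ℝ² is a bounded domain with 0 ∈ Ω, R = sup_{x∈Ω}|x|, a ≥ 1, and A a real 2×2 symmetric positive definite matrix, dμ_A = c·exp(−(1/2)xᵀAx)dx. Then for all u ∈ C_c^1(Ω): (1/4) ∫_Ω |u|² / (|x|²(log(aR/|x|))²) dμ_A ≤ ∫_Ω |∇u·x/|x||² dμ_A + (1/2) ∫_Ω |u|² (xᵀAx) / (|x|²(log(aR/|x|))) dμ_A. -/

import Mathlib

open MeasureTheory Real Set Filter


noncomputable def ee : EuclideanSpace ℝ (Fin 2) ≃ᵐ ℝ × ℝ :=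
  (MeasurableEquiv.toLp 2 (Fin 2 → ℝ)).symm.trans (MeasurableEquiv.finTwoArrow)

lemma ee_symm_apply (p : ℝ × ℝ) (i : Fin 2) : (ee.symm p) i = ![p.1, p.2] i := by
  simp [ee, MeasurableEquiv.finTwoArrow, MeasurableEquiv.toLp,
    MeasurableEquiv.piFinTwo, MeasurableEquiv.trans, WithLp.equiv, piFinTwoEquiv]

lemma ee_norm (θ : ℝ) : ‖ee.symm (Real.cos θ, Real.sin θ)‖ = 1 := by
  rw [EuclideanSpace.norm_eq]
  simp [Fin.sum_univ_two, ee_symm_apply]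

lemma ee_mp : MeasurePreserving ee :=
  (volume_preserving_finTwoArrow ℝ).comp (EuclideanSpace.volume_preserving_symm_measurableEquiv_toLp (Fin 2))

lemma ee_mp_symm : MeasurePreserving (⇑ee.symm) volume volume :=
  MeasurePreserving.symm ee ee_mp

lemma ee_smul (r θ : ℝ) :
    ee.symm (r * Real.cos θ, r * Real.sin θ) = r • ee.symm (Real.cos θ, Real.sin θ) := by
  ext i
  rw [ee_symm_apply]
  have h : (r • ee.symm (Real.cos θ, Real.sin θ)) i
      = r * (ee.symm (Real.cos θ, Real.sin θ)) i := rfl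
  rw [h, ee_symm_apply]
  fin_cases i <;> simp

/-- transfer of integrability to polar coordinates -/
lemma integrableOn_polar_target {f : ℝ × ℝ → ℝ} (hf : Integrable f) :
    IntegrableOn (fun p : ℝ × ℝ => p.1 • f (polarCoord.symm p)) polarCoord.target := by
  have hs : MeasurableSet polarCoord.target := polarCoord.open_target.measurableSet
  set B : ℝ × ℝ → ℝ × ℝ →L[ℝ] ℝ × ℝ := fun p =>
    LinearMap.toContinuousLinearMap (Matrix.toLin (Module.Basis.finTwoProd ℝ) (Module.Basis.finTwoProd ℝ)
      !![Real.cos p.2, -p.1 * Real.sin p.2; Real.sin p.2, p.1 * Real.cos p.2]) with hB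
  have B_det : ∀ p, (B p).det = p.1 := by
    intro p
    conv_rhs => rw [← one_mul p.1, ← cos_sq_add_sin_sq p.2]
    simp only [hB, neg_mul, LinearMap.det_toContinuousLinearMap, LinearMap.det_toLin,
      Matrix.det_fin_two_of, sub_neg_eq_add]
    ring
  have hder : ∀ p ∈ polarCoord.target,
      HasFDerivWithinAt polarCoord.symm (B p) polarCoord.target p :=
    fun p _ => (hasFDerivAt_polarCoord_symm p).hasFDerivWithinAt
  have hinj : Set.InjOn polarCoord.symm polarCoord.target := by
    have := polarCoord.symm.injOn
    rwa [OpenPartialHomeomorph.symm_source] at this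
  have hiff := integrableOn_image_iff_integrableOn_abs_det_fderiv_smul volume hs hder hinj f
  have himg : polarCoord.symm '' polarCoord.target = polarCoord.source :=
    polarCoord.symm_image_target_eq_source
  rw [himg] at hiff
  have hsrc : IntegrableOn f polarCoord.source := hf.integrableOn
  rw [hiff] at hsrc
  apply hsrc.congr_fun ?_ hs
  intro p hp
  simp only [B_det p, abs_of_pos (show 0 < p.1 from hp.1)]

lemma tendsto_inv_log_zero {b : ℝ} (hb : 0 < b) :
    Tendsto (fun r => (Real.log (b / r))⁻¹) (nhdsWithin 0 (Ioi 0)) (nhds 0) := by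
  apply Filter.Tendsto.inv_tendsto_atTop
  apply Real.tendsto_log_atTop.comp
  have h1 : Tendsto (fun r : ℝ => r⁻¹) (nhdsWithin 0 (Ioi 0)) atTop := tendsto_inv_nhdsGT_zero
  have h2 := h1.const_mul_atTop hb
  refine h2.congr fun r => ?_
  rw [div_eq_mul_inv]

lemma cwa_inv_log_zero {b : ℝ} (hb : 0 < b) :
    ContinuousWithinAt (fun r => (Real.log (b / r))⁻¹) (Ici 0) 0 := by
  have hval : (Real.log (b / (0:ℝ)))⁻¹ = 0 := by simp
  show Tendsto (fun r => (Real.log (b / r))⁻¹) (nhdsWithin 0 (Ici 0)) (nhds ((Real.log (b/(0:ℝ)))⁻¹))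
  rw [hval, show Ici (0:ℝ) = {0} ∪ Ioi 0 by
      ext y; simp [le_iff_lt_or_eq, or_comm, eq_comm],
    nhdsWithin_union]
  rw [tendsto_sup]
  constructor
  · rw [nhdsWithin_singleton]
    refine tendsto_pure_left.mpr ?_
    intro s hs
    simpa using mem_of_mem_nhds hs
  · exact tendsto_inv_log_zero hb

/-- integrability of the singular radial weight -/
lemma integrableOn_weight {b R₁ : ℝ} (hb : 0 < b) (h1 : 0 < R₁) (h2 : R₁ < b) :
    IntegrableOn (fun r => 1 / (r * (Real.log (b / r)) ^ 2)) (Ioc 0 R₁) := by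
  have hcont : ContinuousOn (fun r => (Real.log (b / r))⁻¹) (Icc 0 R₁) := by
    intro r hr
    rcases eq_or_lt_of_le hr.1 with h | h
    · rw [← h]
      exact (cwa_inv_log_zero hb).mono Icc_subset_Ici_self
    · have hbr : 1 < b / r := (one_lt_div h).mpr (lt_of_le_of_lt hr.2 h2)
      have : ContinuousAt (fun r => (Real.log (b / r))⁻¹) r := by
        have hc1 : ContinuousAt (fun r : ℝ => b / r) r := continuousAt_const.div continuousAt_id h.ne'
        have hc2 : ContinuousAt Real.log (b / r) := Real.continuousAt_log (by positivity)
        exact (hc2.comp hc1).inv₀ (by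
          intro hz
          rw [Function.comp_apply, Real.log_eq_zero] at hz
          rcases hz with hz | hz | hz <;> nlinarith)
      exact this.continuousWithinAt
  have hderiv : ∀ r ∈ Ioo 0 R₁,
      HasDerivAt (fun r => (Real.log (b / r))⁻¹) (1 / (r * (Real.log (b / r)) ^ 2)) r := by
    intro r hr
    have hbr : 1 < b / r := (one_lt_div hr.1).mpr (lt_trans hr.2 h2)
    have hLpos : 0 < Real.log (b / r) := Real.log_pos hbr
    have hlog : HasDerivAt (fun s => Real.log (b / s)) (-r⁻¹) r := by
      have h1' : HasDerivAt (fun s : ℝ => Real.log b - Real.log s) (-r⁻¹) r :=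
        (Real.hasDerivAt_log hr.1.ne').const_sub _
      apply h1'.congr_of_eventuallyEq
      filter_upwards [eventually_gt_nhds hr.1] with s hs
      rw [Real.log_div (by positivity) hs.ne']
    have := hlog.inv hLpos.ne'
    refine this.congr_deriv ?_
    rw [neg_neg]; ring
  have hpos : ∀ r ∈ Ioo 0 R₁, 0 ≤ 1 / (r * (Real.log (b / r)) ^ 2) := by
    intro r hr
    have : (0:ℝ) < r := hr.1
    positivity
  exact intervalIntegral.integrableOn_deriv_of_nonneg hcont hderiv hpos


set_option maxHeartbeats 2000000 in
theorem stmt_17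
    (Ω : Set (EuclideanSpace ℝ (Fin 2))) (hΩopen : IsOpen Ω) (hΩconn : IsConnected Ω)
    (hΩbdd : Bornology.IsBounded Ω) (h0 : (0 : EuclideanSpace ℝ (Fin 2)) ∈ Ω)
    (R : ℝ) (hR : R = sSup ((fun x => ‖x‖) '' Ω))
    (a : ℝ) (ha : 1 ≤ a)
    (A : Matrix (Fin 2) (Fin 2) ℝ) (hAsymm : A.IsSymm) (hA : A.PosDef)
    (c : ℝ) (hc : 0 < c)
    (ρ : EuclideanSpace ℝ (Fin 2) → ℝ)
    (hρ : ∀ x, ρ x = c * Real.exp (-(1 / 2) * ∑ i, ∑ j, A i j * x i * x j))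
    (u : EuclideanSpace ℝ (Fin 2) → ℝ)
    (hu : ContDiff ℝ 1 u) (husupp : HasCompactSupport u) (huΩ : tsupport u ⊆ Ω) :
    (1 / 4) * ∫ x in Ω, |u x| ^ 2 / (‖x‖ ^ 2 * (Real.log (a * R / ‖x‖)) ^ 2) * ρ x ≤
      (∫ x in Ω, |fderiv ℝ u x ((‖x‖)⁻¹ • x)| ^ 2 * ρ x) +
      (1 / 2) * ∫ x in Ω, |u x| ^ 2 * (∑ i, ∑ j, A i j * x i * x j) /
        (‖x‖ ^ 2 * Real.log (a * R / ‖x‖)) * ρ x := by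
  classical
  set Q : EuclideanSpace ℝ (Fin 2) → ℝ := fun x => ∑ i, ∑ j, A i j * x i * x j with hQdef
  set Iint : EuclideanSpace ℝ (Fin 2) → ℝ := fun x => |u x| ^ 2 / (‖x‖ ^ 2 * (Real.log (a * R / ‖x‖)) ^ 2) * ρ x
    with hIdef
  set Kint : EuclideanSpace ℝ (Fin 2) → ℝ := fun x => |fderiv ℝ u x ((‖x‖)⁻¹ • x)| ^ 2 * ρ x with hKdef
  set Jint : EuclideanSpace ℝ (Fin 2) → ℝ := fun x => |u x| ^ 2 * Q x / (‖x‖ ^ 2 * Real.log (a * R / ‖x‖)) * ρ x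
    with hJdef
  -- basic geometry of Ω and R
  have hbdd : BddAbove ((fun x => ‖x‖) '' Ω) := by
    obtain ⟨C, hC⟩ := hΩbdd.exists_norm_le
    exact ⟨C, by rintro y ⟨x, hx, rfl⟩; exact hC x hx⟩
  have hRle : ∀ x ∈ Ω, ‖x‖ ≤ R := by
    intro x hx
    rw [hR]
    exact le_csSup hbdd ⟨x, hx, rfl⟩
  have hRpos : 0 < R := by
    obtain ⟨ε, hε, hball⟩ := Metric.isOpen_iff.mp hΩopen 0 h0
    have hy : EuclideanSpace.single (0 : Fin 2) (ε/2) ∈ Ω := by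
      apply hball
      rw [Metric.mem_ball, dist_zero_right, EuclideanSpace.norm_single,
        Real.norm_eq_abs, abs_of_pos (half_pos hε)]
      linarith
    have := hRle _ hy
    rw [EuclideanSpace.norm_single, Real.norm_eq_abs, abs_of_pos (half_pos hε)] at this
    linarith
  have hRlt : ∀ x ∈ Ω, ‖x‖ < R := by
    intro x hx
    rcases eq_or_lt_of_le (hRle x hx) with h | h
    swap
    · exact h
    exfalso
    have hx0 : x ≠ 0 := by
      intro h0'
      rw [h0'] at h
      simp at h
      exact hRpos.ne h
    have hxn : 0 < ‖x‖ := norm_pos_iff.mpr hx0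
    obtain ⟨ε, hε, hball⟩ := Metric.isOpen_iff.mp hΩopen x hx
    set y := (1 + ε/(2*‖x‖)) • x with hy
    have hyΩ : y ∈ Ω := by
      apply hball
      rw [Metric.mem_ball, dist_eq_norm, hy]
      have : (1 + ε/(2*‖x‖)) • x - x = (ε/(2*‖x‖)) • x := by
        rw [add_smul, one_smul]; abel
      rw [this, norm_smul, Real.norm_eq_abs, abs_of_pos (by positivity)]
      have h5 : ε/(2*‖x‖) * ‖x‖ = ε/2 := by field_simp
      rw [h5]
      linarith
    have hyR : ‖y‖ ≤ R := hRle y hyΩ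
    rw [hy, norm_smul, Real.norm_eq_abs, abs_of_pos (by positivity)] at hyR
    have h5 : ε/(2*‖x‖) * ‖x‖ = ε/2 := by field_simp
    rw [add_mul, one_mul, h5, h] at hyR
    linarith
  have haR : 0 < a * R := by nlinarith
  have hRaR : R ≤ a * R := by nlinarith
  -- R₁ : radius bound for the support
  obtain ⟨R₁, hR₁pos, hR₁lt, hR₁supp⟩ :
      ∃ R₁ : ℝ, 0 < R₁ ∧ R₁ < R ∧ ∀ x ∈ tsupport u, ‖x‖ ≤ R₁ := by
    have hcpt : IsCompact (insert (0 : EuclideanSpace ℝ (Fin 2)) (tsupport u)) :=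
      husupp.insert 0
    obtain ⟨x₀, hx₀mem, hx₀max⟩ := hcpt.exists_isMaxOn (insert_nonempty _ _)
      (continuous_norm.continuousOn (s := insert 0 (tsupport u)))
    refine ⟨max ‖x₀‖ (R/2), lt_max_of_lt_right (half_pos hRpos), ?_, ?_⟩
    · apply max_lt ?_ (half_lt_self hRpos)
      apply hRlt
      rcases hx₀mem with h | h
      · rw [h]; exact h0
      · exact huΩ h
    · intro x hx
      exact le_trans (hx₀max (subset_insert _ _ hx)) (le_max_left _ _)
  have hR₁aR : R₁ < a * R := lt_of_lt_of_le hR₁lt hRaR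
  set L₀ : ℝ := Real.log (a * R / R₁) with hL₀def
  have hL₀pos : 0 < L₀ := Real.log_pos ((one_lt_div hR₁pos).mpr hR₁aR)
  have hLmono : ∀ r : ℝ, 0 < r → r ≤ R₁ → L₀ ≤ Real.log (a * R / r) := by
    intro r hr hrR₁
    apply Real.log_le_log (by positivity)
    exact div_le_div_of_nonneg_left haR.le hr hrR₁
  -- quadratic form facts
  have hQnonneg : ∀ x : EuclideanSpace ℝ (Fin 2), 0 ≤ Q x := by
    intro x
    have h := hA.posSemidef.dotProduct_mulVec_nonneg (fun i => x i)
    simp only [dotProduct, Matrix.mulVec, Fin.sum_univ_two, star_trivial,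
      Pi.star_apply] at h
    simp only [hQdef, Fin.sum_univ_two]
    nlinarith [h]
  set MA : ℝ := |A 0 0| + |A 0 1| + |A 1 0| + |A 1 1| with hMAdef
  have hMAnn : 0 ≤ MA := by positivity
  have hcoord : ∀ (x : EuclideanSpace ℝ (Fin 2)) (i : Fin 2), |x i| ≤ ‖x‖ := by
    intro x i
    rw [EuclideanSpace.norm_eq]
    have h1 : |x i| = Real.sqrt (|x i|^2) := by
      rw [Real.sqrt_sq_eq_abs, abs_abs]
    rw [h1]
    apply Real.sqrt_le_sqrt
    have := Finset.single_le_sum (f := fun j => ‖x j‖^2) (fun j _ => by positivity)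
      (Finset.mem_univ i)
    simpa [Real.norm_eq_abs] using this
  have hQbound : ∀ x : EuclideanSpace ℝ (Fin 2), |Q x| ≤ MA * ‖x‖ ^ 2 := by
    intro x
    have e : Q x = A 0 0 * x 0 * x 0 + A 0 1 * x 0 * x 1
        + A 1 0 * x 1 * x 0 + A 1 1 * x 1 * x 1 := by
      simp [hQdef, Fin.sum_univ_two]; ring
    have hb : ∀ (co s t : ℝ), |s| ≤ ‖x‖ → |t| ≤ ‖x‖ → |co * s * t| ≤ |co| * ‖x‖^2 := by
      intro co s t hs ht
      rw [abs_mul, abs_mul, pow_two, ← mul_assoc]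
      have h0 : (0:ℝ) ≤ ‖x‖ := norm_nonneg x
      apply mul_le_mul ?_ ht (abs_nonneg t) (by positivity)
      exact mul_le_mul le_rfl hs (abs_nonneg s) (abs_nonneg co)
    rw [e, hMAdef]
    have h00 := hb (A 0 0) (x 0) (x 0) (hcoord x 0) (hcoord x 0)
    have h01 := hb (A 0 1) (x 0) (x 1) (hcoord x 0) (hcoord x 1)
    have h10 := hb (A 1 0) (x 1) (x 0) (hcoord x 1) (hcoord x 0)
    have h11 := hb (A 1 1) (x 1) (x 1) (hcoord x 1) (hcoord x 1)
    calc |A 0 0 * x 0 * x 0 + A 0 1 * x 0 * x 1 + A 1 0 * x 1 * x 0 + A 1 1 * x 1 * x 1|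
        ≤ |A 0 0 * x 0 * x 0 + A 0 1 * x 0 * x 1 + A 1 0 * x 1 * x 0| + |A 1 1 * x 1 * x 1| :=
          abs_add_le _ _
      _ ≤ (|A 0 0 * x 0 * x 0 + A 0 1 * x 0 * x 1| + |A 1 0 * x 1 * x 0|) + |A 1 1 * x 1 * x 1| :=
          by gcongr; exact abs_add_le _ _
      _ ≤ ((|A 0 0 * x 0 * x 0| + |A 0 1 * x 0 * x 1|) + |A 1 0 * x 1 * x 0|) + |A 1 1 * x 1 * x 1| :=
          by gcongr; exact abs_add_le _ _
      _ ≤ (|A 0 0| + |A 0 1| + |A 1 0| + |A 1 1|) * ‖x‖ ^ 2 := by nlinarith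
  have hρpos : ∀ x, 0 < ρ x := fun x => by rw [hρ]; positivity
  have hρle : ∀ x, ρ x ≤ c := by
    intro x
    rw [hρ x]
    have h1 : Real.exp (-(1/2) * Q x) ≤ 1 := Real.exp_le_one_iff.mpr (by nlinarith [hQnonneg x])
    nlinarith [Real.exp_pos (-(1/2) * Q x)]
  have hQcont : Continuous Q := by
    rw [hQdef]
    have : (fun x : EuclideanSpace ℝ (Fin 2) => ∑ i, ∑ j, A i j * x i * x j)
        = fun x : EuclideanSpace ℝ (Fin 2) => A 0 0 * x 0 * x 0 + A 0 1 * x 0 * x 1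
          + (A 1 0 * x 1 * x 0 + A 1 1 * x 1 * x 1) := by
      funext x
      simp [Fin.sum_univ_two]
    rw [this]
    have hc0 : Continuous fun x : EuclideanSpace ℝ (Fin 2) => x 0 :=
      (continuous_apply (0 : Fin 2)).comp (PiLp.continuous_ofLp 2 _)
    have hc1 : Continuous fun x : EuclideanSpace ℝ (Fin 2) => x 1 :=
      (continuous_apply (1 : Fin 2)).comp (PiLp.continuous_ofLp 2 _)
    fun_prop
  have hρcont : Continuous ρ := by
    have : ρ = fun x => c * Real.exp (-(1/2) * Q x) := by
      funext x; rw [hρ x]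
    rw [this]
    fun_prop
  -- bounds on u and its derivative
  obtain ⟨Mu, hMu⟩ : ∃ M : ℝ, ∀ x, |u x| ≤ M := by
    obtain ⟨M, hM⟩ := husupp.exists_bound_of_continuous hu.continuous
    exact ⟨M, fun x => by simpa [Real.norm_eq_abs] using hM x⟩
  have hMunn : 0 ≤ Mu := le_trans (abs_nonneg _) (hMu 0)
  obtain ⟨Md, hMd⟩ : ∃ M : ℝ, ∀ x, ‖fderiv ℝ u x‖ ≤ M :=
    (husupp.fderiv ℝ).exists_bound_of_continuous (hu.continuous_fderiv one_ne_zero)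
  have hMdnn : 0 ≤ Md := le_trans (norm_nonneg _) (hMd 0)
  -- vanishing outside the support
  have hvan : ∀ x : EuclideanSpace ℝ (Fin 2), x ∉ tsupport u → u x = 0 ∧ fderiv ℝ u x = 0 := by
    intro x hx
    constructor
    · exact image_eq_zero_of_notMem_tsupport hx
    · by_contra h
      exact hx (support_fderiv_subset ℝ (Function.mem_support.mpr h))
  have hIvan : ∀ x, x ∉ Ω → Iint x = 0 := by
    intro x hx
    have h := hvan x (fun h => hx (huΩ h))
    simp [hIdef, h.1]
  have hKvan : ∀ x, x ∉ Ω → Kint x = 0 := by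
    intro x hx
    have h := hvan x (fun h => hx (huΩ h))
    simp [hKdef, h.2]
  have hJvan : ∀ x, x ∉ Ω → Jint x = 0 := by
    intro x hx
    have h := hvan x (fun h => hx (huΩ h))
    simp [hJdef, h.1]
  -- integrability of Kint and Jint
  have hlogm : Measurable fun x : EuclideanSpace ℝ (Fin 2) => Real.log (a * R / ‖x‖) :=
    Real.measurable_log.comp (measurable_const.div continuous_norm.measurable)
  have hfdm : Measurable fun x : EuclideanSpace ℝ (Fin 2) => fderiv ℝ u x ((‖x‖)⁻¹ • x) := by
    have h1 : Measurable fun x : EuclideanSpace ℝ (Fin 2) =>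
        ((fderiv ℝ u x, (‖x‖)⁻¹ • x) :
          (EuclideanSpace ℝ (Fin 2) →L[ℝ] ℝ) × EuclideanSpace ℝ (Fin 2)) :=
      ((hu.continuous_fderiv one_ne_zero).measurable).prodMk
        (continuous_norm.measurable.inv.smul measurable_id)
    have h2 : Continuous fun p : (EuclideanSpace ℝ (Fin 2) →L[ℝ] ℝ) × EuclideanSpace ℝ (Fin 2) =>
        p.1 p.2 := isBoundedBilinearMap_apply.continuous
    exact h2.measurable.comp h1
  have hKm : AEStronglyMeasurable Kint (volume : Measure (EuclideanSpace ℝ (Fin 2))) := by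
    rw [hKdef]
    exact (((hfdm.abs.pow_const 2).mul hρcont.measurable)).aestronglyMeasurable
  have hJm : AEStronglyMeasurable Jint (volume : Measure (EuclideanSpace ℝ (Fin 2))) := by
    rw [hJdef]
    exact ((((hu.continuous.measurable.abs.pow_const 2).mul hQcont.measurable).div
      ((continuous_norm.measurable.pow_const 2).mul hlogm)).mul
      hρcont.measurable).aestronglyMeasurable
  have hIm : AEStronglyMeasurable Iint (volume : Measure (EuclideanSpace ℝ (Fin 2))) := by
    rw [hIdef]
    exact (((hu.continuous.measurable.abs.pow_const 2).div
      ((continuous_norm.measurable.pow_const 2).mul (hlogm.pow_const 2))).mul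
      hρcont.measurable).aestronglyMeasurable
  have hKnn : ∀ x, 0 ≤ Kint x := fun x =>
    mul_nonneg (by positivity) (hρpos x).le
  have hJnn : ∀ x ∈ Ω, 0 ≤ Jint x := by
    intro x hx
    have hd : 0 ≤ ‖x‖ ^ 2 * Real.log (a * R / ‖x‖) := by
      rcases eq_or_ne x 0 with h | h
      · simp [h]
      · have hxn : 0 < ‖x‖ := norm_pos_iff.mpr h
        apply mul_nonneg (by positivity)
        apply Real.log_nonneg
        rw [le_div_iff₀ hxn]
        nlinarith [hRlt x hx]
    exact mul_nonneg (div_nonneg (mul_nonneg (by positivity) (hQnonneg x)) hd) (hρpos x).le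
  have hInn : ∀ x, 0 ≤ Iint x := fun x =>
    mul_nonneg (div_nonneg (by positivity) (by positivity)) (hρpos x).le
  have hsuppmeas : MeasurableSet (tsupport u) := (isClosed_tsupport u).measurableSet
  have hsuppfin : volume (tsupport u) < ⊤ := husupp.measure_lt_top
  have hKi : Integrable Kint (volume : Measure (EuclideanSpace ℝ (Fin 2))) := by
    apply Integrable.mono' (g := (tsupport u).indicator fun _ => Md^2 * c)
      ((integrable_indicator_iff hsuppmeas).mpr
        (integrableOn_const hsuppfin.ne)) hKm
    apply ae_of_all
    intro x
    by_cases hx : x ∈ tsupport u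
    · rw [indicator_of_mem hx]
      have hv : ‖(‖x‖)⁻¹ • x‖ ≤ 1 := by
        rcases eq_or_ne x 0 with h | h
        · simp [h]
        · rw [norm_smul, Real.norm_eq_abs,
            abs_of_pos (inv_pos.mpr (norm_pos_iff.mpr h)), inv_mul_cancel₀
            (norm_ne_zero_iff.mpr h)]
      have h3 : |fderiv ℝ u x ((‖x‖)⁻¹ • x)| ≤ Md := by
        calc |fderiv ℝ u x ((‖x‖)⁻¹ • x)| ≤ ‖fderiv ℝ u x‖ * ‖(‖x‖)⁻¹ • x‖ :=
              (fderiv ℝ u x).le_opNorm _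
          _ ≤ Md * 1 := mul_le_mul (hMd x) hv (norm_nonneg _) hMdnn
          _ = Md := mul_one _
      rw [Real.norm_eq_abs, abs_of_nonneg (hKnn x), hKdef]
      exact mul_le_mul (by nlinarith [abs_nonneg (fderiv ℝ u x ((‖x‖)⁻¹ • x))])
        (hρle x) (hρpos x).le (by positivity)
    · rw [indicator_of_notMem hx]
      have : Kint x = 0 := by simp [hKdef, (hvan x hx).2]
      simp [this]
  have hJi : Integrable Jint (volume : Measure (EuclideanSpace ℝ (Fin 2))) := by
    apply Integrable.mono' (g := (tsupport u).indicator fun _ => Mu^2 * MA / L₀ * c)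
      ((integrable_indicator_iff hsuppmeas).mpr
        (integrableOn_const hsuppfin.ne)) hJm
    apply ae_of_all
    intro x
    by_cases hx : x ∈ tsupport u
    · rw [indicator_of_mem hx]
      rcases eq_or_ne x 0 with h | h
      · have : Jint x = 0 := by
          have : Q (0 : EuclideanSpace ℝ (Fin 2)) = 0 := by
            simp [hQdef, Fin.sum_univ_two]
          simp [hJdef, h, this]
        rw [this]
        simp only [norm_zero]
        positivity
      · have hxn : 0 < ‖x‖ := norm_pos_iff.mpr h
        have hxR₁ : ‖x‖ ≤ R₁ := hR₁supp x hx
        have hL := hLmono ‖x‖ hxn hxR₁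
        have hLpos : 0 < Real.log (a * R / ‖x‖) := lt_of_lt_of_le hL₀pos hL
        have hd1 : 0 < ‖x‖^2 * L₀ := by positivity
        have hd2 : ‖x‖^2 * L₀ ≤ ‖x‖^2 * Real.log (a * R / ‖x‖) := by
          apply mul_le_mul_of_nonneg_left hL (by positivity)
        have hnum : |u x|^2 * Q x ≤ Mu^2 * (MA * ‖x‖^2) := by
          apply mul_le_mul ?_ ((le_abs_self _).trans (hQbound x)) (hQnonneg x) (by positivity)
          have := hMu x
          nlinarith [abs_nonneg (u x)]
        have hdiv : |u x|^2 * Q x / (‖x‖^2 * Real.log (a * R / ‖x‖))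
            ≤ Mu^2 * (MA * ‖x‖^2) / (‖x‖^2 * L₀) :=
          div_le_div₀ (by positivity) hnum hd1 hd2
        have hsimp : Mu^2 * (MA * ‖x‖^2) / (‖x‖^2 * L₀) = Mu^2 * MA / L₀ := by
          field_simp
        rw [hsimp] at hdiv
        have hJx : 0 ≤ Jint x := by
          rw [hJdef]
          exact mul_nonneg (div_nonneg (mul_nonneg (by positivity) (hQnonneg x))
            (by positivity)) (hρpos x).le
        rw [Real.norm_eq_abs, abs_of_nonneg hJx, hJdef]
        exact mul_le_mul hdiv (hρle x) (hρpos x).le (by positivity)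
    · rw [indicator_of_notMem hx]
      have : Jint x = 0 := by simp [hJdef, (hvan x hx).1]
      simp [this]
  -- nonnegativity
  -- set integral = global integral
  have hIset : ∫ x in Ω, Iint x = ∫ x, Iint x := setIntegral_eq_integral_of_forall_compl_eq_zero hIvan
  have hKset : ∫ x in Ω, Kint x = ∫ x, Kint x := setIntegral_eq_integral_of_forall_compl_eq_zero hKvan
  have hJset : ∫ x in Ω, Jint x = ∫ x, Jint x := setIntegral_eq_integral_of_forall_compl_eq_zero hJvan
  by_cases hIi : IntegrableOn Iint Ω volume
  swap
  · -- non-integrable case : left side vanishes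
    have hI0 : ∫ x in Ω, Iint x = 0 := integral_undef hIi
    rw [hI0]
    have h1 : 0 ≤ ∫ x in Ω, Kint x := setIntegral_nonneg hΩopen.measurableSet fun x _ => hKnn x
    have h2 : 0 ≤ ∫ x in Ω, Jint x := setIntegral_nonneg hΩopen.measurableSet hJnn
    nlinarith
  -- integrable case
  have hIglob : Integrable Iint (volume : Measure (EuclideanSpace ℝ (Fin 2))) := by
    have h : Iint = Ω.indicator Iint := by
      funext x
      by_cases hx : x ∈ Ω
      · rw [indicator_of_mem hx]
      · rw [indicator_of_notMem hx, hIvan x hx]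
    rw [h]
    exact (integrable_indicator_iff hΩopen.measurableSet).mpr hIi
  -- the main inequality
  have hφray : ∀ θ : ℝ, Integrable
        (fun r => (r, θ).1 • ((fun x => Kint x + (1/2) * Jint x - (1/4) * Iint x)
          (ee.symm (polarCoord.symm (r, θ))))) (volume.restrict (Ioi 0)) →
      0 ≤ ∫ r in Ioi 0, (r, θ).1 • ((fun x => Kint x + (1/2) * Jint x - (1/4) * Iint x)
          (ee.symm (polarCoord.symm (r, θ)))) := by
    intro θ hsl
    set ω : EuclideanSpace ℝ (Fin 2) := ee.symm (Real.cos θ, Real.sin θ) with hωdef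
    have hωn : ‖ω‖ = 1 := ee_norm θ
    have hpcs : ∀ r : ℝ, ee.symm (polarCoord.symm (r, θ)) = r • ω := by
      intro r
      rw [polarCoord_symm_apply]
      exact ee_smul r θ
    set φ : ℝ → ℝ := fun r => u (r • ω) with hφdef
    set Dφ : ℝ → ℝ := fun r => fderiv ℝ u (r • ω) ω with hDφdef
    set ψ : ℝ → ℝ := fun r => ρ (r • ω) with hψdef
    set q : ℝ := Q ω with hqdef
    have hsmc : Continuous fun r : ℝ => r • ω := continuous_id.smul continuous_const
    have hφc : Continuous φ := hu.continuous.comp hsmc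
    have hDφc : Continuous Dφ := isBoundedBilinearMap_apply.continuous.comp
      (((hu.continuous_fderiv one_ne_zero).comp hsmc).prodMk continuous_const)
    have hψc : Continuous ψ := hρcont.comp hsmc
    have hψpos : ∀ r, 0 < ψ r := fun r => hρpos _
    have hψle : ∀ r, ψ r ≤ c := fun r => hρle _
    have hφb : ∀ r, |φ r| ≤ Mu := fun r => hMu _
    have hDφb : ∀ r, |Dφ r| ≤ Md := by
      intro r
      calc |Dφ r| ≤ ‖fderiv ℝ u (r • ω)‖ * ‖ω‖ := (fderiv ℝ u (r • ω)).le_opNorm ω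
        _ = ‖fderiv ℝ u (r • ω)‖ := by rw [hωn, mul_one]
        _ ≤ Md := hMd _
    have hrn : ∀ r : ℝ, 0 < r → ‖r • ω‖ = r := by
      intro r hr
      rw [norm_smul, hωn, mul_one, Real.norm_eq_abs, abs_of_pos hr]
    have hsupp_ray : ∀ r : ℝ, R₁ < r → φ r = 0 ∧ Dφ r = 0 := by
      intro r hr
      have hnm : r • ω ∉ tsupport u := by
        intro hmem
        have := hR₁supp _ hmem
        rw [hrn r (lt_trans hR₁pos hr)] at this
        linarith
      obtain ⟨h1, h2⟩ := hvan _ hnm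
      exact ⟨h1, by rw [hDφdef]; simp [h2]⟩
    have hQr : ∀ r : ℝ, Q (r • ω) = r^2 * q := by
      intro r
      have hsm0 : (r • ω) 0 = r * ω 0 := rfl
      have hsm1 : (r • ω) 1 = r * ω 1 := rfl
      simp only [hQdef, hqdef, Fin.sum_univ_two, hsm0, hsm1]
      ring
    have hψval : ∀ r : ℝ, ψ r = c * Real.exp (-(1/2) * (r^2 * q)) := by
      intro r
      rw [hψdef]
      simp only
      rw [hρ]
      have h := hQr r
      simp only [hQdef] at h
      rw [h]
    have hφd : ∀ r : ℝ, HasDerivAt φ (Dφ r) r := by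
      intro r
      have h1 : HasDerivAt (fun s : ℝ => s • ω) ω r := by
        simpa using (hasDerivAt_id r).smul_const ω
      exact ((hu.differentiable one_ne_zero) (r • ω)).hasFDerivAt.comp_hasDerivAt r h1
    have hψd : ∀ r : ℝ, HasDerivAt ψ (-(r * q) * ψ r) r := by
      intro r
      have hin : HasDerivAt (fun s : ℝ => -(1/2) * (s^2 * q)) (-(1/2) * (2 * r * q)) r := by
        have h2 := ((hasDerivAt_pow 2 r).mul_const q).const_mul (-(1/2) : ℝ)
        refine h2.congr_deriv ?_
        norm_num
      have base := (hin.exp.const_mul c)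
      have hfun : (fun s : ℝ => c * Real.exp (-(1/2) * (s^2 * q))) = ψ := by
        funext s
        rw [hψval s]
      rw [hfun] at base
      refine base.congr_deriv ?_
      rw [hψval r]
      ring
    have hLd : ∀ r : ℝ, 0 < r → HasDerivAt (fun s => Real.log (a * R / s)) (-r⁻¹) r := by
      intro r hr
      have h1 : HasDerivAt (fun s : ℝ => Real.log (a * R) - Real.log s) (-r⁻¹) r :=
        (Real.hasDerivAt_log hr.ne').const_sub _
      apply h1.congr_of_eventuallyEq
      filter_upwards [eventually_gt_nhds hr] with s hs
      rw [Real.log_div (by positivity) hs.ne']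
    set g : ℝ → ℝ := fun r => (1/2) * ((φ r)^2 * ψ r) / Real.log (a * R / r) with hgdef
    set g' : ℝ → ℝ := fun r => (φ r * Dφ r - r * q * (φ r)^2 / 2) * ψ r / Real.log (a * R / r)
        + (φ r)^2 * ψ r / (2 * r * (Real.log (a * R / r))^2) with hg'def
    have hg'zero : ∀ r : ℝ, R₁ < r → g' r = 0 := by
      intro r hr
      obtain ⟨h1, h2⟩ := hsupp_ray r hr
      simp [hg'def, h1, h2]
    have hgd : ∀ r ∈ Ioi (0:ℝ), HasDerivAt g (g' r) r := by
      intro r hr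
      rw [mem_Ioi] at hr
      by_cases hcase : r < a * R
      · have hLpos : 0 < Real.log (a * R / r) := Real.log_pos ((one_lt_div hr).mpr hcase)
        have d1 : HasDerivAt (fun s => (φ s)^2) (2 * φ r * Dφ r) r := by
          have := (hφd r).pow 2
          refine this.congr_deriv ?_
          norm_num
        have d2 := d1.mul (hψd r)
        have d3 := d2.const_mul ((1:ℝ)/2)
        have d4 := d3.div (hLd r hr) hLpos.ne'
        refine d4.congr_deriv ?_
        rw [hg'def]
        simp only [Pi.mul_apply]
        field_simp
        ring
      · push_neg at hcase
        have hrR₁ : R₁ < r := lt_of_lt_of_le hR₁aR hcase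
        have hev : g =ᶠ[nhds r] fun _ => 0 := by
          filter_upwards [eventually_gt_nhds hrR₁] with s hs
          obtain ⟨h1, _⟩ := hsupp_ray s hs
          simp [hgdef, h1]
        rw [hg'zero r hrR₁]
        exact (hasDerivAt_const r 0).congr_of_eventuallyEq hev
    have hg0 : g 0 = 0 := by
      simp [hgdef]
    have hcont0 : ContinuousWithinAt g (Ici 0) 0 := by
      have hbase : ContinuousWithinAt (fun r => (Real.log (a * R / r))⁻¹) (Ici 0) 0 :=
        cwa_inv_log_zero haR
      have hnum : Continuous (fun r : ℝ => (1/2) * ((φ r)^2 * ψ r)) := by fun_prop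
      have hmul := hnum.continuousWithinAt.mul hbase
      apply hmul.congr
      · intro s _
        rw [hgdef]
        simp only
        rw [div_eq_mul_inv, Pi.mul_apply]
      · rw [hgdef]
        simp only
        rw [div_eq_mul_inv, Pi.mul_apply]
    have htop : Tendsto g atTop (nhds 0) := by
      have hev : (fun _ : ℝ => (0:ℝ)) =ᶠ[atTop] g := by
        filter_upwards [eventually_gt_atTop R₁] with r hr
        obtain ⟨h1, _⟩ := hsupp_ray r hr
        simp [hgdef, h1]
      exact Tendsto.congr' hev tendsto_const_nhds
    have hg'm : Measurable g' := by
      have hLrm : Measurable (fun r : ℝ => Real.log (a * R / r)) :=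
        Real.measurable_log.comp (measurable_const.div measurable_id)
      rw [hg'def]
      apply Measurable.add
      · exact (((hφc.measurable.mul hDφc.measurable).sub
          (((measurable_id.mul_const q).mul (hφc.measurable.pow_const 2)).div_const 2)).mul
          hψc.measurable).div hLrm
      · exact ((hφc.measurable.pow_const 2).mul hψc.measurable).div
          ((measurable_const.mul measurable_id).mul (hLrm.pow_const 2))
    set C₁ : ℝ := (Mu * Md + R₁ * |q| * Mu^2 / 2) * c / L₀ with hC₁def
    set C₂ : ℝ := Mu^2 * c / 2 with hC₂def
    have hg'int : IntegrableOn g' (Ioi 0) := by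
      rw [show Ioi (0:ℝ) = Ioc 0 R₁ ∪ Ioi R₁ from (Ioc_union_Ioi_eq_Ioi hR₁pos.le).symm]
      apply IntegrableOn.union
      · have hbint : IntegrableOn
            (fun r => C₁ + C₂ * (1 / (r * (Real.log (a * R / r))^2))) (Ioc 0 R₁) := by
          exact (integrableOn_const measure_Ioc_lt_top.ne).add
            ((integrableOn_weight haR hR₁pos hR₁aR).const_mul C₂)
        apply Integrable.mono' hbint (hg'm.aestronglyMeasurable.restrict)
        rw [ae_restrict_iff' measurableSet_Ioc]
        apply ae_of_all
        intro r hr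
        have hr0 : 0 < r := hr.1
        have hL := hLmono r hr.1 hr.2
        have hLpos : 0 < Real.log (a * R / r) := lt_of_lt_of_le hL₀pos hL
        have hb1 : |φ r * Dφ r - r * q * (φ r)^2 / 2| ≤ Mu * Md + R₁ * |q| * Mu^2 / 2 := by
          have h1 := hφb r
          have h2 := hDφb r
          have h3 : |r| ≤ R₁ := by rw [abs_of_pos hr0]; exact hr.2
          have h4 : (φ r)^2 ≤ Mu^2 := by nlinarith [abs_nonneg (φ r), sq_abs (φ r)]
          have e1 : |φ r * Dφ r| = |φ r| * |Dφ r| := abs_mul _ _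
          have e2 : |r * q * (φ r)^2 / 2| = |r| * |q| * (φ r)^2 / 2 := by
            rw [abs_div, abs_mul, abs_mul, abs_pow, sq_abs]
            norm_num
          calc |φ r * Dφ r - r * q * (φ r)^2 / 2|
              ≤ |φ r * Dφ r| + |r * q * (φ r)^2 / 2| := abs_sub _ _
            _ ≤ Mu * Md + R₁ * |q| * Mu^2 / 2 := by
                rw [e1, e2]
                have p1 : |φ r| * |Dφ r| ≤ Mu * Md :=
                  mul_le_mul h1 h2 (abs_nonneg _) hMunn
                have p2 : |r| * |q| * (φ r)^2 ≤ R₁ * |q| * Mu^2 := by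
                  apply mul_le_mul (mul_le_mul h3 le_rfl (abs_nonneg q) hR₁pos.le) h4
                    (sq_nonneg _) (by positivity)
                linarith
        have ht1 : |(φ r * Dφ r - r * q * (φ r)^2 / 2) * ψ r / Real.log (a * R / r)| ≤ C₁ := by
          rw [abs_div, abs_mul, abs_of_pos (hψpos r), abs_of_pos hLpos, hC₁def]
          apply div_le_div₀ (by positivity) ?_ hL₀pos hL
          exact mul_le_mul hb1 (hψle r) (hψpos r).le (by positivity)
        have ht2 : |(φ r)^2 * ψ r / (2 * r * (Real.log (a * R / r))^2)|
            ≤ C₂ * (1 / (r * (Real.log (a * R / r))^2)) := by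
          have hd : 0 < 2 * r * (Real.log (a * R / r))^2 := by positivity
          rw [abs_of_nonneg (div_nonneg (mul_nonneg (sq_nonneg _) (hψpos r).le) hd.le)]
          have e3 : C₂ * (1 / (r * (Real.log (a * R / r))^2))
              = Mu^2 * c / (2 * r * (Real.log (a * R / r))^2) := by
            rw [hC₂def]
            ring
          rw [e3]
          apply div_le_div₀ (by positivity) ?_ hd le_rfl
          have h4 : (φ r)^2 ≤ Mu^2 := by
            nlinarith [hφb r, abs_nonneg (φ r), sq_abs (φ r)]
          exact mul_le_mul h4 (hψle r) (hψpos r).le (by positivity)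
        calc ‖g' r‖ = |g' r| := Real.norm_eq_abs _
          _ ≤ |(φ r * Dφ r - r * q * (φ r)^2 / 2) * ψ r / Real.log (a * R / r)|
              + |(φ r)^2 * ψ r / (2 * r * (Real.log (a * R / r))^2)| := by
                rw [hg'def]
                exact abs_add_le _ _
          _ ≤ C₁ + C₂ * (1 / (r * (Real.log (a * R / r))^2)) := add_le_add ht1 ht2
      · have hEq : EqOn g' (fun _ => (0:ℝ)) (Ioi R₁) := fun r hr => hg'zero r hr
        exact (integrableOn_congr_fun hEq measurableSet_Ioi).mpr integrableOn_zero
    have hFTC : ∫ r in Ioi (0:ℝ), g' r = 0 := by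
      have := integral_Ioi_of_hasDerivAt_of_tendsto hcont0 hgd hg'int htop
      rw [this, hg0, sub_zero]
    have hIden : ∀ r ∈ Ioi (0:ℝ),
        (r, θ).1 • ((fun x => Kint x + (1/2) * Jint x - (1/4) * Iint x)
          (ee.symm (polarCoord.symm (r, θ))))
        = ψ r * (r * Dφ r + φ r / (2 * Real.log (a * R / r)))^2 / r - g' r := by
      intro r hr
      rw [mem_Ioi] at hr
      rw [smul_eq_mul]
      simp only
      rw [hpcs r]
      have hxn : ‖r • ω‖ = r := hrn r hr
      have hxu : (‖r • ω‖)⁻¹ • (r • ω) = ω := by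
        rw [hxn, smul_smul, inv_mul_cancel₀ hr.ne', one_smul]
      have hKx : Kint (r • ω) = (Dφ r)^2 * ψ r := by
        rw [hKdef]
        simp only
        rw [hxu, sq_abs]
      have hIx : Iint (r • ω) = (φ r)^2 / (r^2 * (Real.log (a * R / r))^2) * ψ r := by
        rw [hIdef]
        simp only
        rw [hxn, sq_abs]
      have hJx : Jint (r • ω) = (φ r)^2 * (r^2 * q) / (r^2 * Real.log (a * R / r)) * ψ r := by
        rw [hJdef]
        simp only
        rw [hxn, hQr r, sq_abs]
      rw [hKx, hIx, hJx]
      by_cases hL : Real.log (a * R / r) = 0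
      · have hraR : r = a * R := by
          rcases Real.log_eq_zero.mp hL with h | h | h
          · exfalso
            have : 0 < a * R / r := by positivity
            linarith
          · field_simp at h
            linarith
          · exfalso
            have : 0 < a * R / r := by positivity
            linarith
        have hrR₁ : R₁ < r := by rw [hraR]; exact hR₁aR
        obtain ⟨h1, h2⟩ := hsupp_ray r hrR₁
        rw [h1, h2, hg'def]
        simp [h1, h2]
      · rw [hg'def]
        simp only
        have hrne : r ≠ 0 := hr.ne'
        field_simp
        ring
    have hsq_int : IntegrableOn
        (fun r => ψ r * (r * Dφ r + φ r / (2 * Real.log (a * R / r)))^2 / r) (Ioi 0) := by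
      apply Integrable.congr (hsl.add hg'int)
      rw [Filter.eventuallyEq_iff_exists_mem]
      refine ⟨Ioi 0, self_mem_ae_restrict measurableSet_Ioi, ?_⟩
      intro r hr
      simp only [Pi.add_apply]
      rw [hIden r hr]
      ring
    have hfinal : ∫ r in Ioi (0:ℝ), (r, θ).1 • ((fun x => Kint x + (1/2) * Jint x
          - (1/4) * Iint x) (ee.symm (polarCoord.symm (r, θ))))
        = (∫ r in Ioi (0:ℝ), ψ r * (r * Dφ r + φ r / (2 * Real.log (a * R / r)))^2 / r)
          - ∫ r in Ioi (0:ℝ), g' r := by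
      rw [← integral_sub hsq_int hg'int]
      apply setIntegral_congr_fun measurableSet_Ioi
      intro r hr
      exact hIden r hr
    rw [hfinal, hFTC, sub_zero]
    apply setIntegral_nonneg measurableSet_Ioi
    intro r hr
    rw [mem_Ioi] at hr
    exact div_nonneg (mul_nonneg (hψpos r).le (sq_nonneg _)) hr.le
  have key : 0 ≤ ∫ x, (Kint x + (1/2) * Jint x - (1/4) * Iint x) := by
    set D : EuclideanSpace ℝ (Fin 2) → ℝ :=
      fun x => Kint x + (1/2) * Jint x - (1/4) * Iint x with hDdef
    have hDi : Integrable D volume := by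
      exact (hKi.add (hJi.const_mul _)).sub (hIglob.const_mul _)
    have hfDi : Integrable (fun p : ℝ × ℝ => D (ee.symm p)) volume :=
      (ee_mp_symm.integrable_comp_emb ee.symm.measurableEmbedding).mpr hDi
    have hFi : IntegrableOn (fun p : ℝ × ℝ => p.1 • D (ee.symm (polarCoord.symm p)))
        polarCoord.target := by
      have := integrableOn_polar_target hfDi
      exact this
    have hmeas_eq : (volume : Measure (ℝ × ℝ)).restrict polarCoord.target
        = ((volume : Measure ℝ).restrict (Ioi 0)).prod
          ((volume : Measure ℝ).restrict (Ioo (-π) π)) := by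
      rw [polarCoord_target, Measure.volume_eq_prod, ← Measure.prod_restrict]
    have hFi' : Integrable (fun p : ℝ × ℝ => p.1 • D (ee.symm (polarCoord.symm p)))
        (((volume : Measure ℝ).restrict (Ioi 0)).prod
          ((volume : Measure ℝ).restrict (Ioo (-π) π))) := by
      rw [← hmeas_eq]
      exact hFi
    have hslice := hFi'.prod_left_ae
    calc (0:ℝ) ≤ ∫ θ in Ioo (-π) π, ∫ r in Ioi (0:ℝ),
          (r, θ).1 • D (ee.symm (polarCoord.symm (r, θ))) := by
          apply integral_nonneg_of_ae
          filter_upwards [hslice] with θ hθ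
          exact hφray θ hθ
      _ = ∫ p in polarCoord.target, p.1 • D (ee.symm (polarCoord.symm p)) := by
          rw [show (∫ p in polarCoord.target, p.1 • D (ee.symm (polarCoord.symm p)))
            = ∫ p : ℝ × ℝ, p.1 • D (ee.symm (polarCoord.symm p))
              ∂(((volume : Measure ℝ).restrict (Ioi 0)).prod
                ((volume : Measure ℝ).restrict (Ioo (-π) π))) from by rw [← hmeas_eq]]
          rw [integral_prod_symm _ hFi']
      _ = ∫ p : ℝ × ℝ, D (ee.symm p) :=
          integral_comp_polarCoord_symm (fun p => D (ee.symm p))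
      _ = ∫ x, D x := ee_mp_symm.integral_comp ee.symm.measurableEmbedding D
  have e1 : Integrable (fun x : EuclideanSpace ℝ (Fin 2) => Kint x + (1/2) * Jint x) volume := by
    exact hKi.add (hJi.const_mul _)
  have e2 : Integrable (fun x : EuclideanSpace ℝ (Fin 2) => (1/4) * Iint x) volume := by
    exact hIglob.const_mul _
  have e3 : Integrable (fun x : EuclideanSpace ℝ (Fin 2) => (1/2) * Jint x) volume := by
    exact hJi.const_mul _
  have hsplit : ∫ x, (Kint x + (1/2) * Jint x - (1/4) * Iint x)
      = (∫ x, Kint x) + (1/2) * (∫ x, Jint x) - (1/4) * (∫ x, Iint x) := by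
    rw [integral_sub e1 e2, integral_add hKi e3, integral_const_mul, integral_const_mul]
  rw [hIset, hKset, hJset]
  linarith [key, hsplit.symm.le]
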